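/- Let A be a finite alphabet and let X ⊆ (ℤ → A) be a subshift, i.e. a closed set (in the product topology, A discrete) with σ(X) = X, where σ(x)(i) = x(i+1). Then for all positive integers m and n there exists a continuous map f : X → (ℤ → Bool) with f(σ(x)) = σ(f(x)) for all x ∈ X, such that: (i) for all x ∈ X and all integers i < j, if f(x)(i) = true and f(x)(j) = true then j − i ≥ n; and (ii) for every x ∈ X such that the restriction of x to the interval [−m, m] has no period p with 0 < p < n (i.e. there is no p with 0 < p < n such that x(i + p) = x(i) whenever −m ≤ i and i + p ≤ m), there exists j with −2n + 1 ≤ j ≤ 0 and f(x)(j) = true. -/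
import Mathlib

/-- The shift map on bi-infinite configurations. -/
def shiftMap {A : Type*} (x : ℤ → A) : ℤ → A := fun i => x (i + 1)

namespace Stmt5Aux

variable {A : Type*}

def shiftZ (k : ℤ) (x : ℤ → A) : ℤ → A := fun i => x (i + k)

lemma shiftZ_shiftZ (k l : ℤ) (x : ℤ → A) : shiftZ k (shiftZ l x) = shiftZ (k + l) x := by
  funext i; simp [shiftZ, add_assoc]

lemma shiftZ_zero (x : ℤ → A) : shiftZ 0 x = x := by funext i; simp [shiftZ]

section
variable [Fintype A]

/-- `x` restricted to `[-m, m]` has a period `p` with `0 < p < n`. -/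
def hasPer (m n : ℕ) (x : ℤ → A) : Prop :=
  ∃ p : ℕ, 0 < p ∧ p < n ∧ ∀ i : ℤ, -(m:ℤ) ≤ i → i + p ≤ (m:ℤ) → x (i + p) = x i

noncomputable def rank (m : ℕ) (x : ℤ → A) : ℕ :=
  (Fintype.equivFin (Fin (2*m+1) → A)) (fun k => x ((k:ℤ) - m))

def agreeOn (m : ℕ) (x y : ℤ → A) : Prop :=
  ∀ j : ℤ, -(m:ℤ) ≤ j → j ≤ (m:ℤ) → x j = y j

lemma hasPer_congr {m n : ℕ} {x y : ℤ → A} (h : agreeOn m x y) :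
    hasPer m n x ↔ hasPer m n y := by
  have key : ∀ x y : ℤ → A, agreeOn m x y → hasPer m n x → hasPer m n y := by
    intro x y h ⟨p, hp0, hpn, hper⟩
    refine ⟨p, hp0, hpn, fun i hi1 hi2 => ?_⟩
    have e1 : y (i + p) = x (i + p) := (h _ (by omega) hi2).symm
    have e2 : y i = x i := (h _ hi1 (by omega)).symm
    rw [e1, e2]; exact hper i hi1 hi2
  exact ⟨key x y h, key y x (fun j h1 h2 => (h j h1 h2).symm)⟩

lemma rank_congr {m : ℕ} {x y : ℤ → A} (h : agreeOn m x y) : rank m x = rank m y := by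
  unfold rank
  have e : (fun k : Fin (2*m+1) => x ((k:ℤ) - m)) = fun k : Fin (2*m+1) => y ((k:ℤ) - m) :=
    funext fun k => h _ (by omega) (by have := k.2; omega)
  rw [e]

lemma rank_lt (m : ℕ) (x : ℤ → A) : rank m x < Fintype.card (Fin (2*m+1) → A) :=
  ((Fintype.equivFin (Fin (2*m+1) → A)) _).2

lemma rank_eq_imp {m : ℕ} {x y : ℤ → A} (h : rank m x = rank m y) : agreeOn m x y := by
  have h' := Fin.val_injective h
  have := (Fintype.equivFin (Fin (2*m+1) → A)).injective h'
  intro j hj1 hj2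
  have hk : (j + m).toNat < 2*m+1 := by omega
  have := congrFun this ⟨(j + m).toNat, hk⟩
  simpa [Int.toNat_of_nonneg (by omega : (0:ℤ) ≤ j + m), add_sub_cancel_right] using this

noncomputable def G (m n : ℕ) : ℕ → Set (ℤ → A)
  | r => {x | ¬ hasPer m n x ∧ rank m x = r ∧
      ∀ i : ℤ, i ≠ 0 → -(n:ℤ) < i → i < (n:ℤ) → ∀ r' < r, shiftZ i x ∉ G m n r'}

lemma mem_G {m n : ℕ} {x : ℤ → A} {r : ℕ} :
    x ∈ G m n r ↔ (¬ hasPer m n x ∧ rank m x = r ∧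
      ∀ i : ℤ, i ≠ 0 → -(n:ℤ) < i → i < (n:ℤ) → ∀ r' < r, shiftZ i x ∉ G m n r') := by
  rw [G]
  rfl


lemma sep {m n : ℕ} {x : ℤ → A} {p : ℤ} {r s : ℕ}
    (hp0 : p ≠ 0) (hp1 : -(n:ℤ) < p) (hp2 : p < (n:ℤ))
    (hx : x ∈ G m n r) (hy : shiftZ p x ∈ G m n s) : False := by
  rcases lt_trichotomy r s with h | h | h
  · exact (mem_G.mp hy).2.2 (-p) (by omega) (by omega) (by omega) r h
      (by rw [shiftZ_shiftZ, neg_add_cancel, shiftZ_zero]; exact hx)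
  · -- r = s : same rank, get a small period, contradiction with ¬ hasPer
    obtain ⟨hgx, hrx, -⟩ := mem_G.mp hx
    obtain ⟨hgy, hry, -⟩ := mem_G.mp hy
    have hag : agreeOn m x (shiftZ p x) := rank_eq_imp (by rw [hrx, hry, h])
    apply hgx
    refine ⟨p.natAbs, by omega, by omega, fun i hi1 hi2 => ?_⟩
    rcases lt_or_gt_of_ne hp0 with hneg | hpos
    · -- p < 0, natAbs p = -p
      have hq : (p.natAbs : ℤ) = -p := by omega
      have := hag (i + p.natAbs) (by omega) hi2
      rw [shiftZ] at this
      have e : i + (p.natAbs : ℤ) + p = i := by omega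
      rw [e] at this
      exact this
    · have hq : (p.natAbs : ℤ) = p := by omega
      have := hag i hi1 (by omega)
      rw [shiftZ] at this
      rw [hq, ← this]
  · exact (mem_G.mp hx).2.2 p hp0 hp1 hp2 s h hy

/-- The marker clopen set. -/
noncomputable def F (m n : ℕ) : Set (ℤ → A) :=
  ⋃ r ∈ Finset.range (Fintype.card (Fin (2*m+1) → A)), G m n r

lemma mem_F {m n : ℕ} {x : ℤ → A} : x ∈ F m n ↔ ∃ r, x ∈ G m n r := by
  constructor
  · rintro hx
    simp only [F, Set.mem_iUnion] at hx
    obtain ⟨r, -, hr⟩ := hx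
    exact ⟨r, hr⟩
  · rintro ⟨r, hr⟩
    have hrank : rank m x = r := (mem_G.mp hr).2.1
    simp only [F, Set.mem_iUnion]
    exact ⟨r, Finset.mem_range.mpr (hrank ▸ rank_lt m x), hr⟩

lemma sepF {m n : ℕ} {x : ℤ → A} {p : ℤ}
    (hp0 : p ≠ 0) (hp1 : -(n:ℤ) < p) (hp2 : p < (n:ℤ))
    (hx : x ∈ F m n) (hy : shiftZ p x ∈ F m n) : False := by
  obtain ⟨r, hr⟩ := mem_F.mp hx
  obtain ⟨s, hs⟩ := mem_F.mp hy
  exact sep hp0 hp1 hp2 hr hs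

lemma cover {m n : ℕ} (hn : 0 < n) {x : ℤ → A} (hg : ¬ hasPer m n x) :
    ∃ i : ℤ, -(n:ℤ) < i ∧ i < (n:ℤ) ∧ shiftZ i x ∈ F m n := by
  by_cases hx : x ∈ G m n (rank m x)
  · exact ⟨0, by omega, by omega, by rw [shiftZ_zero]; exact mem_F.mpr ⟨_, hx⟩⟩
  · rw [mem_G] at hx
    push_neg at hx
    obtain ⟨i, hi0, hi1, hi2, r', -, hr'⟩ := hx hg rfl
    exact ⟨i, hi1, hi2, mem_F.mpr ⟨r', hr'⟩⟩

section Topo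
variable [TopologicalSpace A] [DiscreteTopology A]

lemma continuous_shiftZ (k : ℤ) : Continuous (shiftZ k : (ℤ → A) → (ℤ → A)) :=
  continuous_pi fun i => continuous_apply (i + k)

lemma clopen_window (m : ℕ) (P : (ℤ → A) → Prop)
    (hP : ∀ x y : ℤ → A, agreeOn m x y → (P x → P y)) : IsClopen {x : ℤ → A | P x} := by
  classical
  by_cases hA : Nonempty A
  case neg =>
    have : {x : ℤ → A | P x} = ∅ := by
      ext x; simp only [Set.mem_setOf_eq, Set.mem_empty_iff_false, iff_false]
      exact fun _ => hA ⟨x 0⟩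
    rw [this]; exact isClopen_empty
  set wd : (ℤ → A) → (Fin (2*m+1) → A) := fun x k => x ((k:ℤ) - m) with hwd
  set ext : (Fin (2*m+1) → A) → (ℤ → A) := fun u j =>
    if h : -(m:ℤ) ≤ j ∧ j ≤ (m:ℤ) then u ⟨(j + m).toNat, by omega⟩
    else Classical.arbitrary A with hext
  have hagree : ∀ x : ℤ → A, agreeOn m x (ext (wd x)) := by
    intro x j hj1 hj2
    simp only [hext, hwd]
    rw [dif_pos ⟨hj1, hj2⟩]
    congr 1
    rw [Int.toNat_of_nonneg (by omega)]
    omega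
  have hset : {x : ℤ → A | P x} = wd ⁻¹' {u | P (ext u)} := by
    ext x
    simp only [Set.mem_setOf_eq, Set.mem_preimage]
    exact ⟨fun h => hP _ _ (hagree x) h,
      fun h => hP _ _ (fun j h1 h2 => (hagree x j h1 h2).symm) h⟩
  have hcont : Continuous wd := continuous_pi fun k => continuous_apply _
  rw [hset]
  exact ⟨(isClosed_discrete _).preimage hcont, (isOpen_discrete _).preimage hcont⟩

set_option maxRecDepth 10000 in
lemma clopen_G (m n : ℕ) (r : ℕ) : IsClopen (G m n (A := A) r) := by
  induction r using Nat.strong_induction_on with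
  | _ r ih =>
    have hdecomp : G m n (A := A) r =
        {x | ¬ hasPer m n x ∧ rank m x = r} ∩
          ⋂ i ∈ (Finset.Icc (-(n:ℤ)+1) ((n:ℤ)-1)).erase 0,
            ⋂ r' ∈ Finset.range r, (shiftZ i ⁻¹' G m n r')ᶜ := by
      ext x
      rw [mem_G]
      simp only [Set.mem_inter_iff, Set.mem_setOf_eq, Set.mem_iInter,
        Finset.mem_erase, Finset.mem_Icc, Finset.mem_range, Set.mem_compl_iff,
        Set.mem_preimage, and_assoc]
      constructor
      · rintro ⟨h1, h2, h3⟩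
        exact ⟨h1, h2, fun i hi r' hr' => h3 i hi.1 (by omega) (by omega) r' hr'⟩
      · rintro ⟨h1, h2, h3⟩
        exact ⟨h1, h2, fun i hi0 hi1 hi2 r' hr' => h3 i ⟨hi0, by omega, by omega⟩ r' hr'⟩
    rw [hdecomp]
    refine IsClopen.inter ?_ ?_
    · exact clopen_window m _ (fun x y hag h => by
        obtain ⟨h1, h2⟩ := h
        exact ⟨fun hy => h1 ((hasPer_congr hag).mpr hy), by rw [← rank_congr hag]; exact h2⟩)
    · refine isClopen_biInter_finset fun i _ => ?_
      refine isClopen_biInter_finset fun r' hr' => ?_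
      exact ((ih r' (Finset.mem_range.mp hr')).preimage (continuous_shiftZ i)).compl

lemma clopen_F (m n : ℕ) : IsClopen (F m n (A := A)) :=
  isClopen_biUnion_finset fun r _ => clopen_G m n r

end Topo
end
end Stmt5Aux

open Stmt5Aux

/-- marker lemma: Let `X ⊆ ℤ → A` be a subshift (closed and
shift-invariant) over a finite alphabet `A`. For all positive integers `m, n` there is
a continuous shift-commuting map `f : X → (ℤ → Bool)` such that (i) any two `true`s in
`f x` are at distance at least `n`, and (ii) whenever the restriction of `x` to
`[-m, m]` has no period `p` with `0 < p < n`, `f x` has a `true` in `[-2n+1, 0]`. -/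
theorem stmt5 {A : Type*} [Fintype A] [TopologicalSpace A] [DiscreteTopology A]
    (X : Set (ℤ → A)) (hclosed : IsClosed X) (hinv : shiftMap '' X = X)
    (m n : ℕ) (hm : 0 < m) (hn : 0 < n) :
    ∃ f : X → (ℤ → Bool),
      Continuous f ∧
      (∀ (x : X) (hx : shiftMap x.val ∈ X), f ⟨shiftMap x.val, hx⟩ = shiftMap (f x)) ∧
      (∀ (x : X) (i j : ℤ), i < j → f x i = true → f x j = true → (n : ℤ) ≤ j - i) ∧
      (∀ x : X,
        (¬ ∃ p : ℕ, 0 < p ∧ p < n ∧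
            ∀ i : ℤ, -(m : ℤ) ≤ i → i + p ≤ (m : ℤ) → x.val (i + p) = x.val i) →
        ∃ j : ℤ, -2 * (n : ℤ) + 1 ≤ j ∧ j ≤ 0 ∧ f x j = true) := by
  classical
  refine ⟨fun x j => if shiftZ (j + (n:ℤ) - 1) x.val ∈ F m n then true else false,
    ?_, ?_, ?_, ?_⟩
  · -- continuity
    refine continuous_pi fun j => ?_
    have h1 : Continuous fun y : ℤ → A => if y ∈ F m n then true else false := by
      refine Continuous.if ?_ continuous_const continuous_const
      intro a ha
      rw [Set.setOf_mem_eq, (clopen_F m n).frontier_eq] at ha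
      exact absurd ha (Set.notMem_empty a)
    exact h1.comp ((continuous_shiftZ _).comp continuous_subtype_val)
  · -- shift commutation
    intro x hx
    funext j
    show (if shiftZ (j + (n:ℤ) - 1) (shiftMap x.val) ∈ F m n then true else false)
        = (if shiftZ (j + 1 + (n:ℤ) - 1) x.val ∈ F m n then true else false)
    have e : shiftZ (j + (n:ℤ) - 1) (shiftMap x.val) = shiftZ (j + 1 + (n:ℤ) - 1) x.val := by
      funext i
      show x.val (i + (j + (n:ℤ) - 1) + 1) = x.val (i + (j + 1 + (n:ℤ) - 1))
      rw [show i + (j + (n:ℤ) - 1) + 1 = i + (j + 1 + (n:ℤ) - 1) from by omega]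
    rw [e]
  · -- spacing
    intro x i j hij hfi hfj
    by_contra hcon
    push_neg at hcon
    have hfi' : (if shiftZ (i + (n:ℤ) - 1) x.val ∈ F m n then true else false) = true := hfi
    have hfj' : (if shiftZ (j + (n:ℤ) - 1) x.val ∈ F m n then true else false) = true := hfj
    have hi' : shiftZ (i + (n:ℤ) - 1) x.val ∈ F m n := by
      by_contra h
      rw [if_neg h] at hfi'
      exact Bool.false_ne_true hfi'
    have hj' : shiftZ (j + (n:ℤ) - 1) x.val ∈ F m n := by
      by_contra h
      rw [if_neg h] at hfj'
      exact Bool.false_ne_true hfj'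
    have e : shiftZ (j + (n:ℤ) - 1) x.val = shiftZ (j - i) (shiftZ (i + (n:ℤ) - 1) x.val) := by
      rw [shiftZ_shiftZ, show j - i + (i + (n:ℤ) - 1) = j + (n:ℤ) - 1 from by omega]
    rw [e] at hj'
    exact sepF (p := j - i) (by omega) (by omega) (by omega) hi' hj'
  · -- coverage
    intro x hgood
    obtain ⟨i, hi1, hi2, hiF⟩ := cover hn hgood
    refine ⟨i - (n:ℤ) + 1, by omega, by omega, ?_⟩
    show (if shiftZ (i - (n:ℤ) + 1 + (n:ℤ) - 1) x.val ∈ F m n then true else false) = true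
    rw [show i - (n:ℤ) + 1 + (n:ℤ) - 1 = i from by omega, if_pos hiF]
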